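/- (Theorem 3, second part) Fix an integer M ≥ 1 and ε ∈ (0,1). The high-SNR advantage of H-ARQ over fixed-length coding with the same diversity order vanishes: lim_{SNR→∞} [ C_ε^{IR,M}(SNR) − C_ε^M(SNR) ] = 0. -/

import Mathlib

open MeasureTheory ProbabilityTheory Real Filter Topology

lemma expMeasure_Iic {T : ℝ} (hT : 0 ≤ T) :
    expMeasure 1 (Set.Iic T) = ENNReal.ofReal (1 - Real.exp (-T)) := by
  haveI := isProbabilityMeasure_expMeasure (r := (1:ℝ)) one_pos
  rw [← ofReal_cdf]
  congr 1
  rw [cdf_expMeasure_eq one_pos, if_pos hT, one_mul]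

lemma expMeasure_Ioi {T : ℝ} (hT : 0 ≤ T) :
    expMeasure 1 (Set.Ioi T) = ENNReal.ofReal (Real.exp (-T)) := by
  haveI := isProbabilityMeasure_expMeasure (r := (1:ℝ)) one_pos
  have hadd := measure_add_measure_compl (μ := expMeasure 1) (measurableSet_Iic (a := T))
  rw [Set.compl_Iic, measure_univ, expMeasure_Iic hT] at hadd
  have h1 : ENNReal.ofReal (1 - Real.exp (-T)) + ENNReal.ofReal (Real.exp (-T)) = 1 := by
    rw [← ENNReal.ofReal_add (by simp [Real.exp_le_one_iff]; positivity) (Real.exp_pos _).le]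
    norm_num
  rw [← h1] at hadd
  exact (ENNReal.add_right_inj ENNReal.ofReal_ne_top).mp hadd

lemma expMeasure_Iic_zero : expMeasure 1 (Set.Iic (0:ℝ)) = 0 := by
  rw [expMeasure_Iic le_rfl]; simp


/-- Number of IR H-ARQ rounds: `X(R, SNR) = min(M, min{m ≥ 1 : Σ_{i=1}^m log₂(1+SNR·Hᵢ) > R})`
(realized as the infimum of `{M} ∪ {m ≥ 1 : accumulated mutual information exceeds R}`). -/
noncomputable def numRounds {Ω : Type*} (H : ℕ → Ω → ℝ) (M : ℕ) (snr R : ℝ) (ω : Ω) : ℕ :=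
  sInf ({M} ∪ {m | 1 ≤ m ∧ R < ∑ i ∈ Finset.range m, Real.logb 2 (1 + snr * H i ω)})

section
variable {Ω : Type*} [MeasurableSpace Ω] (H : ℕ → Ω → ℝ)

lemma measurable_S (hmeas : ∀ i, Measurable (H i)) (snr : ℝ) (m : ℕ) :
    Measurable fun ω => ∑ i ∈ Finset.range m, Real.logb 2 (1 + snr * H i ω) := by
  apply Finset.measurable_sum
  intro i _
  have : Measurable fun ω => (1 + snr * H i ω) := by measurability
  simpa [Real.logb] using (Real.measurable_log.comp this).div_const _

lemma numRounds_le (M : ℕ) (snr R : ℝ) (ω : Ω) : numRounds H M snr R ω ≤ M :=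
  Nat.sInf_le (Or.inl rfl)

lemma one_le_numRounds (M : ℕ) (hM : 1 ≤ M) (snr R : ℝ) (ω : Ω) :
    1 ≤ numRounds H M snr R ω := by
  rcases Nat.sInf_mem (s := {M} ∪ {m | 1 ≤ m ∧ R < ∑ i ∈ Finset.range m,
      Real.logb 2 (1 + snr * H i ω)}) ⟨M, Or.inl rfl⟩ with h | h
  · rw [Set.mem_singleton_iff] at h; rw [numRounds, h]; exact hM
  · exact h.1

lemma numRounds_mem (M : ℕ) (snr R : ℝ) (ω : Ω) :
    numRounds H M snr R ω ∈ ({M} ∪ {m | 1 ≤ m ∧ R < ∑ i ∈ Finset.range m,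
      Real.logb 2 (1 + snr * H i ω)} : Set ℕ) :=
  Nat.sInf_mem ⟨M, Or.inl rfl⟩

lemma measurable_numRounds (hmeas : ∀ i, Measurable (H i)) (M : ℕ) (snr R : ℝ) :
    Measurable (numRounds H M snr R) := by
  apply measurable_to_countable'
  intro k
  have hmem : ∀ j : ℕ, MeasurableSet {ω : Ω | j ∈ ({M} ∪ {m | 1 ≤ m ∧
      R < ∑ i ∈ Finset.range m, Real.logb 2 (1 + snr * H i ω)} : Set ℕ)} := by
    intro j
    have : {ω : Ω | j ∈ ({M} ∪ {m | 1 ≤ m ∧ R < ∑ i ∈ Finset.range m,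
        Real.logb 2 (1 + snr * H i ω)} : Set ℕ)}
        = {ω : Ω | j = M} ∪ ({ω : Ω | 1 ≤ j} ∩
          {ω : Ω | R < ∑ i ∈ Finset.range j, Real.logb 2 (1 + snr * H i ω)}) := by
      ext ω; simp [Set.mem_union, Set.mem_setOf_eq]
    rw [this]
    exact (MeasurableSet.const _).union ((MeasurableSet.const _).inter
      (measurableSet_lt measurable_const (measurable_S H hmeas snr j)))
  have hset : {ω : Ω | numRounds H M snr R ω = k} =
      {ω : Ω | k ∈ ({M} ∪ {m | 1 ≤ m ∧ R < ∑ i ∈ Finset.range m,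
        Real.logb 2 (1 + snr * H i ω)} : Set ℕ)} ∩
      ⋂ (j : ℕ) (_ : j < k), {ω : Ω | j ∈ ({M} ∪ {m | 1 ≤ m ∧ R < ∑ i ∈ Finset.range m,
        Real.logb 2 (1 + snr * H i ω)} : Set ℕ)}ᶜ := by
    ext ω
    simp only [Set.mem_inter_iff, Set.mem_iInter, Set.mem_compl_iff, Set.mem_setOf_eq]
    constructor
    · rintro rfl
      exact ⟨numRounds_mem H M snr R ω, fun j hj => Nat.notMem_of_lt_sInf hj⟩
    · rintro ⟨hk, hlt⟩
      refine le_antisymm (Nat.sInf_le hk) ?_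
      exact le_csInf ⟨M, Or.inl rfl⟩ fun b hb => by by_contra hbk; exact hlt b (by omega) hb
  rw [show numRounds H M snr R ⁻¹' {k} = {ω : Ω | numRounds H M snr R ω = k} from rfl, hset]
  exact (hmem k).inter (MeasurableSet.iInter fun j => MeasurableSet.iInter fun _ => (hmem j).compl)

end

set_option maxHeartbeats 2000000 in
/-- Theorem 3, second part: the high-SNR advantage of H-ARQ over fixed-length
coding of the same diversity order vanishes:
`lim_{SNR→∞} [C_ε^{IR,M}(SNR) − C_ε^M(SNR)] = 0`. -/
theorem harq_advantage_vanishes_high_snr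
    {Ω : Type*} [MeasurableSpace Ω] (μ : Measure Ω) [IsProbabilityMeasure μ]
    (H : ℕ → Ω → ℝ) (hmeas : ∀ i, Measurable (H i))
    (hindep : iIndepFun H μ)
    (hdist : ∀ i, Measure.map (H i) μ = expMeasure 1)
    (M : ℕ) (hM : 1 ≤ M) (ε : ℝ) (hε : ε ∈ Set.Ioo (0:ℝ) 1)
    (C : ℝ → ℝ)
    (hC : ∀ snr > (0:ℝ), 0 < C snr ∧
      (μ {ω | (1 / (M:ℝ)) * ∑ i ∈ Finset.range M,
          Real.logb 2 (1 + snr * H i ω) ≤ C snr}).toReal = ε) :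
    Tendsto
      (fun snr : ℝ =>
        ((M : ℝ) * C snr) / (∫ ω, (numRounds H M snr ((M : ℝ) * C snr) ω : ℝ) ∂μ) - C snr)
      atTop (𝓝 0) := by
  classical
  -- almost surely, all the fading coefficients are positive
  have hpos : ∀ᵐ ω ∂μ, ∀ i, 0 < H i ω := by
    rw [ae_all_iff]
    intro i
    have h0 : μ {ω | ¬ 0 < H i ω} = 0 := by
      have : {ω | ¬ 0 < H i ω} = H i ⁻¹' Set.Iic 0 := by ext ω; simp
      rw [this, ← Measure.map_apply (hmeas i) measurableSet_Iic, hdist i, expMeasure_Iic_zero]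
    exact h0
  -- trivial case M = 1
  by_cases hM1 : M = 1
  · subst hM1
    have hX1 : ∀ snr R : ℝ, ∀ ω : Ω, numRounds H 1 snr R ω = 1 := fun snr R ω =>
      le_antisymm (numRounds_le H 1 snr R ω) (one_le_numRounds H 1 le_rfl snr R ω)
    have : (fun snr : ℝ =>
        ((1 : ℕ) : ℝ) * C snr / (∫ ω, (numRounds H 1 snr (((1:ℕ) : ℝ) * C snr) ω : ℝ) ∂μ)
          - C snr) = fun _ => 0 := by
      funext snr
      have : (∫ ω, (numRounds H 1 snr (((1:ℕ):ℝ) * C snr) ω : ℝ) ∂μ) = 1 := by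
        simp [hX1]
      rw [this]; simp
    rw [this]
    exact tendsto_const_nhds
  have hM2 : 2 ≤ M := by omega
  have hMr0 : (0:ℝ) < M := by exact_mod_cast Nat.pos_of_ne_zero (by omega)
  have hMr1 : (1:ℝ) < M := by exact_mod_cast hM2
  -- choose `a` : a high quantile of the max of M fading coefficients
  obtain ⟨a, ha1, haP⟩ : ∃ a : ℝ, 1 ≤ a ∧ ε < (μ {ω | ∀ i < M, H i ω ≤ a}).toReal := by
    have hmono : Monotone (fun n : ℕ => {ω : Ω | ∀ i < M, H i ω ≤ n}) := by
      intro n n' hnn ω hω i hi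
      exact (hω i hi).trans (by exact_mod_cast hnn)
    have hunion : (⋃ n : ℕ, {ω : Ω | ∀ i < M, H i ω ≤ n}) = Set.univ := by
      ext ω
      simp only [Set.mem_iUnion, Set.mem_setOf_eq, Set.mem_univ, iff_true]
      obtain ⟨n, hn⟩ := exists_nat_ge (∑ i ∈ Finset.range M, |H i ω|)
      refine ⟨n, fun i hi => ?_⟩
      calc H i ω ≤ |H i ω| := le_abs_self _
        _ ≤ ∑ i ∈ Finset.range M, |H i ω| :=
            Finset.single_le_sum (f := fun j => |H j ω|) (fun j _ => abs_nonneg _) (Finset.mem_range.mpr hi)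
        _ ≤ n := hn
    have htend := tendsto_measure_iUnion_atTop (μ := μ) hmono
    rw [hunion, measure_univ] at htend
    have htoReal : Tendsto (fun n : ℕ => (μ {ω : Ω | ∀ i < M, H i ω ≤ n}).toReal)
        atTop (𝓝 1) := by
      have := (ENNReal.tendsto_toReal (a := 1) (by simp)).comp htend
      exact this
    have := htoReal.eventually (eventually_gt_nhds hε.2)
    obtain ⟨n, hn1, hn2⟩ := (this.and (eventually_ge_atTop 1)).exists
    exact ⟨n, by exact_mod_cast hn2, hn1⟩
  -- choose `q` : a low quantile of ∑ log₂ Hᵢ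
  obtain ⟨q, hqP⟩ : ∃ q : ℝ,
      (μ {ω | ∑ i ∈ Finset.range M, Real.logb 2 (H i ω) ≤ (M:ℝ) * q}).toReal < ε := by
    have hZmeas : Measurable fun ω => ∑ i ∈ Finset.range M, Real.logb 2 (H i ω) := by
      apply Finset.measurable_sum
      intro i _
      simpa [Real.logb] using (Real.measurable_log.comp (hmeas i)).div_const _
    have hanti : Antitone (fun n : ℕ =>
        {ω : Ω | ∑ i ∈ Finset.range M, Real.logb 2 (H i ω) ≤ -(n:ℝ)}) := by
      intro n n' hnn ω hω
      simp only [Set.mem_setOf_eq] at hω ⊢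
      refine hω.trans (by simp; exact_mod_cast hnn)
    have hinter : (⋂ n : ℕ, {ω : Ω | ∑ i ∈ Finset.range M,
        Real.logb 2 (H i ω) ≤ -(n:ℝ)}) = ∅ := by
      ext ω
      simp only [Set.mem_iInter, Set.mem_setOf_eq, Set.mem_empty_iff_false, iff_false, not_forall]
      obtain ⟨n, hn⟩ := exists_nat_gt (-(∑ i ∈ Finset.range M, Real.logb 2 (H i ω)))
      exact ⟨n, by push_neg; linarith⟩
    have htend := tendsto_measure_iInter_atTop (μ := μ)
      (s := fun n : ℕ => {ω : Ω | ∑ i ∈ Finset.range M, Real.logb 2 (H i ω) ≤ -(n:ℝ)})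
      (fun n => ((hZmeas measurableSet_Iic).nullMeasurableSet)) hanti
      ⟨0, measure_ne_top μ _⟩
    rw [hinter, measure_empty] at htend
    have htoReal : Tendsto (fun n : ℕ => (μ {ω : Ω | ∑ i ∈ Finset.range M,
        Real.logb 2 (H i ω) ≤ -(n:ℝ)}).toReal) atTop (𝓝 0) := by
      have := (ENNReal.tendsto_toReal (a := 0) (by simp)).comp htend
      exact this
    obtain ⟨n, hn⟩ := (htoReal.eventually (eventually_lt_nhds hε.1)).exists
    refine ⟨-(n:ℝ) / (M:ℝ), ?_⟩
    have : (M:ℝ) * (-(n:ℝ) / (M:ℝ)) = -(n:ℝ) := by field_simp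
    rw [this]
    exact hn

  -- upper bound on the outage capacity
  have hCub : ∀ snr : ℝ, 0 < snr → C snr < Real.logb 2 (1 + snr * a) := by
    intro snr hsnr0
    by_contra hcon
    push_neg at hcon
    have hsub : {ω : Ω | ∀ i < M, H i ω ≤ a} ≤ᵐ[μ]
        {ω : Ω | (1 / (M:ℝ)) * ∑ i ∈ Finset.range M,
          Real.logb 2 (1 + snr * H i ω) ≤ C snr} := by
      filter_upwards [hpos] with ω hω hmem
      have hsum : ∑ i ∈ Finset.range M, Real.logb 2 (1 + snr * H i ω)
          ≤ (M:ℝ) * Real.logb 2 (1 + snr * a) := by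
        calc ∑ i ∈ Finset.range M, Real.logb 2 (1 + snr * H i ω)
            ≤ ∑ _i ∈ Finset.range M, Real.logb 2 (1 + snr * a) := by
              apply Finset.sum_le_sum
              intro i hi
              apply Real.logb_le_logb_of_le one_lt_two
                (by nlinarith [hω i, mul_pos hsnr0 (hω i)])
              nlinarith [hmem i (Finset.mem_range.mp hi), hsnr0.le]
          _ = (M:ℝ) * Real.logb 2 (1 + snr * a) := by
              rw [Finset.sum_const, Finset.card_range, nsmul_eq_mul]
      have h1 : (1 / (M:ℝ)) * ∑ i ∈ Finset.range M, Real.logb 2 (1 + snr * H i ω)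
          ≤ Real.logb 2 (1 + snr * a) := by
        rw [div_mul_eq_mul_div, one_mul, div_le_iff₀ hMr0, mul_comm]
        exact hsum
      exact h1.trans hcon
    have hle := ENNReal.toReal_mono (measure_ne_top μ _) (measure_mono_ae hsub)
    rw [(hC snr hsnr0).2] at hle
    linarith
  -- lower bound on the outage capacity
  have hClb : ∀ snr : ℝ, 0 < snr → Real.logb 2 snr + q < C snr := by
    intro snr hsnr0
    by_contra hcon
    push_neg at hcon
    have hsub : {ω : Ω | (1 / (M:ℝ)) * ∑ i ∈ Finset.range M,
          Real.logb 2 (1 + snr * H i ω) ≤ C snr} ≤ᵐ[μ]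
        {ω : Ω | ∑ i ∈ Finset.range M, Real.logb 2 (H i ω) ≤ (M:ℝ) * q} := by
      filter_upwards [hpos] with ω hω hmem
      have h1 : ∀ i ∈ Finset.range M,
          Real.logb 2 snr + Real.logb 2 (H i ω) ≤ Real.logb 2 (1 + snr * H i ω) := by
        intro i _
        rw [← Real.logb_mul (ne_of_gt hsnr0) (ne_of_gt (hω i))]
        exact Real.logb_le_logb_of_le one_lt_two (mul_pos hsnr0 (hω i)) (by linarith)
      have h2 := Finset.sum_le_sum h1
      rw [Finset.sum_add_distrib, Finset.sum_const, Finset.card_range, nsmul_eq_mul] at h2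
      have h3 : ∑ i ∈ Finset.range M, Real.logb 2 (1 + snr * H i ω)
          ≤ (M:ℝ) * (Real.logb 2 snr + q) := by
        have h4 : ∑ i ∈ Finset.range M, Real.logb 2 (1 + snr * H i ω)
            = (M:ℝ) * ((1 / (M:ℝ)) * ∑ i ∈ Finset.range M,
              Real.logb 2 (1 + snr * H i ω)) := by
          field_simp
        rw [h4]
        exact mul_le_mul_of_nonneg_left (hmem.trans hcon) hMr0.le
      have h5 : (M:ℝ) * (Real.logb 2 snr + q) = (M:ℝ) * Real.logb 2 snr + (M:ℝ) * q := by ring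
      show ∑ i ∈ Finset.range M, Real.logb 2 (H i ω) ≤ (M:ℝ) * q
      linarith
    have hle := ENNReal.toReal_mono (measure_ne_top μ _) (measure_mono_ae hsub)
    rw [(hC snr hsnr0).2] at hle
    linarith

  -- key constants
  set β : ℝ := ((M:ℝ) - 1)⁻¹ with hβdef
  have hβ : 0 < β := inv_pos.mpr (by linarith)
  set c₀ : ℝ := (2:ℝ) ^ ((M:ℝ) / ((M:ℝ) - 1) * q) with hc₀def
  have hc₀ : 0 < c₀ := Real.rpow_pos_of_pos two_pos _
  set A : ℝ := (Real.logb 2 (1 + a) + 1 / Real.log 2) * (M:ℝ) ^ 2 * Real.exp 1 with hAdef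
  -- the key pointwise bound for each large snr
  have key : ∀ snr : ℝ, 1 ≤ snr →
      0 ≤ (M:ℝ) * C snr / (∫ ω, (numRounds H M snr ((M:ℝ) * C snr) ω : ℝ) ∂μ) - C snr ∧
      (M:ℝ) * C snr / (∫ ω, (numRounds H M snr ((M:ℝ) * C snr) ω : ℝ) ∂μ) - C snr
        ≤ A * (snr * Real.exp (-(c₀ * snr ^ β))) := by
    intro snr hs1
    have hsnr0 : (0:ℝ) < snr := lt_of_lt_of_le one_pos hs1
    obtain ⟨hCpos, hCe⟩ := hC snr hsnr0
    set R : ℝ := (M:ℝ) * C snr with hRdef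
    have hXmeas : Measurable fun ω => (numRounds H M snr R ω : ℝ) :=
      measurable_from_top.comp (measurable_numRounds H hmeas M snr R)
    have hXint : Integrable (fun ω => (numRounds H M snr R ω : ℝ)) μ := by
      refine Integrable.mono' (integrable_const (M:ℝ)) hXmeas.aestronglyMeasurable ?_
      refine ae_of_all _ fun ω => ?_
      rw [Real.norm_eq_abs, abs_of_nonneg (by positivity)]
      exact_mod_cast numRounds_le H M snr R ω
    set E : ℝ := ∫ ω, (numRounds H M snr R ω : ℝ) ∂μ with hEdef
    have hE1 : 1 ≤ E := by
      have := integral_mono (μ := μ) (integrable_const (1:ℝ)) hXint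
        (fun ω => by show (1:ℝ) ≤ (numRounds H M snr R ω : ℝ); exact_mod_cast one_le_numRounds H M hM snr R ω)
      simpa using this
    have hEM : E ≤ (M:ℝ) := by
      have := integral_mono (μ := μ) hXint (integrable_const (M:ℝ))
        (fun ω => by show (numRounds H M snr R ω : ℝ) ≤ (M:ℝ); exact_mod_cast numRounds_le H M snr R ω)
      simpa using this
    have hEpos : (0:ℝ) < E := lt_of_lt_of_le one_pos hE1
    have hindicator : ∀ m : ℕ, MeasurableSet {ω : Ω | numRounds H M snr R ω ≤ m} :=
      fun m => (measurable_numRounds H hmeas M snr R) measurableSet_Iic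
    have hstep1 : ∀ ω : Ω, (M:ℝ) - (numRounds H M snr R ω : ℝ)
        = ∑ m ∈ Finset.Ico 1 M, (if numRounds H M snr R ω ≤ m then (1:ℝ) else 0) := by
      intro ω
      have hk1 := one_le_numRounds H M hM snr R ω
      have hkM := numRounds_le H M snr R ω
      rw [Finset.sum_boole]
      have hfil : (Finset.Ico 1 M).filter (fun m => numRounds H M snr R ω ≤ m)
          = Finset.Ico (numRounds H M snr R ω) M := by
        ext x; simp only [Finset.mem_filter, Finset.mem_Ico]; omega
      rw [hfil, Nat.card_Ico, Nat.cast_sub hkM]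
    have hιind : ∀ m : ℕ, (fun ω => if numRounds H M snr R ω ≤ m then (1:ℝ) else 0)
        = Set.indicator {ω : Ω | numRounds H M snr R ω ≤ m} (fun _ => (1:ℝ)) := by
      intro m
      funext ω
      by_cases h : numRounds H M snr R ω ≤ m <;> simp [Set.indicator, h]
    have hstep2 : (M:ℝ) - E = ∑ m ∈ Finset.Ico 1 M,
        (μ {ω : Ω | numRounds H M snr R ω ≤ m}).toReal := by
      have hι : ∀ m : ℕ,
          Integrable (fun ω => if numRounds H M snr R ω ≤ m then (1:ℝ) else 0) μ := by
        intro m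
        rw [hιind m]
        exact (integrable_const (1:ℝ)).indicator (hindicator m)
      have h1 : (M:ℝ) - E = ∫ ω, ((M:ℝ) - (numRounds H M snr R ω : ℝ)) ∂μ := by
        rw [integral_sub (integrable_const _) hXint, integral_const]
        simp [hEdef]
      rw [h1]
      calc ∫ ω, ((M:ℝ) - (numRounds H M snr R ω : ℝ)) ∂μ
          = ∫ ω, (∑ m ∈ Finset.Ico 1 M,
              (if numRounds H M snr R ω ≤ m then (1:ℝ) else 0)) ∂μ := by
            congr 1; funext ω; exact hstep1 ω
        _ = ∑ m ∈ Finset.Ico 1 M, ∫ ω,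
              (if numRounds H M snr R ω ≤ m then (1:ℝ) else 0) ∂μ :=
            integral_finset_sum _ (fun m _ => hι m)
        _ = ∑ m ∈ Finset.Ico 1 M, (μ {ω : Ω | numRounds H M snr R ω ≤ m}).toReal := by
            refine Finset.sum_congr rfl fun m _ => ?_
            rw [hιind m, integral_indicator_const _ (hindicator m), smul_eq_mul, mul_one, measureReal_def]
    have hstep3 : ∀ m ∈ Finset.Ico 1 M,
        μ {ω : Ω | numRounds H M snr R ω ≤ m}
          ≤ μ {ω : Ω | R < ∑ i ∈ Finset.range m, Real.logb 2 (1 + snr * H i ω)} := by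
      intro m hm
      rw [Finset.mem_Ico] at hm
      apply measure_mono_ae
      filter_upwards [hpos] with ω hω hmem
      rcases numRounds_mem H M snr R ω with hk | hk
      · rw [Set.mem_singleton_iff] at hk
        have hmem' : numRounds H M snr R ω ≤ m := hmem
        exact absurd hk (by omega)
      · obtain ⟨hk1, hkR⟩ := hk
        have hsubm : Finset.range (numRounds H M snr R ω) ⊆ Finset.range m :=
          Finset.range_subset_range.mpr hmem
        have hmono : ∑ i ∈ Finset.range (numRounds H M snr R ω),
            Real.logb 2 (1 + snr * H i ω) ≤ ∑ i ∈ Finset.range m,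
            Real.logb 2 (1 + snr * H i ω) :=
          Finset.sum_le_sum_of_subset_of_nonneg hsubm (fun i _ _ =>
            Real.logb_nonneg one_lt_two (by nlinarith [hω i, mul_pos hsnr0 (hω i)]))
        exact lt_of_lt_of_le hkR hmono
    have htail : ∀ m ∈ Finset.Ico 1 M,
        (μ {ω : Ω | R < ∑ i ∈ Finset.range m, Real.logb 2 (1 + snr * H i ω)}).toReal
          ≤ (M:ℝ) * Real.exp (-(c₀ * snr ^ β - 1)) := by
      intro m hm
      rw [Finset.mem_Ico] at hm
      have hm0 : (0:ℝ) < m := by exact_mod_cast hm.1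
      set u : ℝ := (M:ℝ) * C snr / m with hudef
      have hu0 : 0 < u := div_pos (mul_pos hMr0 hCpos) hm0
      set T : ℝ := ((2:ℝ) ^ u - 1) / snr with hTdef
      have h2u1 : (1:ℝ) ≤ (2:ℝ) ^ u := by
        have := Real.rpow_le_rpow_of_exponent_le one_le_two hu0.le
        rwa [Real.rpow_zero] at this
      have hT0 : 0 ≤ T := div_nonneg (by linarith) hsnr0.le
      have hsub : {ω : Ω | R < ∑ i ∈ Finset.range m, Real.logb 2 (1 + snr * H i ω)}
          ⊆ ⋃ i ∈ Finset.range m, {ω : Ω | u < Real.logb 2 (1 + snr * H i ω)} := by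
        intro ω hω
        by_contra hcon
        simp only [Set.mem_iUnion, Set.mem_setOf_eq, not_exists, not_lt] at hcon
        have hle : ∑ i ∈ Finset.range m, Real.logb 2 (1 + snr * H i ω) ≤ (m:ℝ) * u := by
          calc ∑ i ∈ Finset.range m, Real.logb 2 (1 + snr * H i ω)
              ≤ ∑ _i ∈ Finset.range m, u :=
                Finset.sum_le_sum (fun i hi => hcon i hi)
            _ = (m:ℝ) * u := by rw [Finset.sum_const, Finset.card_range, nsmul_eq_mul]
        have hmu : (m:ℝ) * u = R := by rw [hudef]; field_simp; rw [hRdef]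
        rw [Set.mem_setOf_eq] at hω
        linarith
      have hone : ∀ i : ℕ, μ {ω : Ω | u < Real.logb 2 (1 + snr * H i ω)}
          ≤ ENNReal.ofReal (Real.exp (-T)) := by
        intro i
        have hae : {ω : Ω | u < Real.logb 2 (1 + snr * H i ω)} ≤ᵐ[μ] H i ⁻¹' Set.Ioi T := by
          filter_upwards [hpos] with ω hω hmem
          have hx : (0:ℝ) < 1 + snr * H i ω := by nlinarith [hω i, mul_pos hsnr0 (hω i)]
          have hmem' : u < Real.logb 2 (1 + snr * H i ω) := hmem
          rw [Real.lt_logb_iff_rpow_lt one_lt_two hx] at hmem'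
          have hTlt : T < H i ω := by
            rw [hTdef, div_lt_iff₀ hsnr0]
            nlinarith [hmem']
          exact hTlt
        calc μ {ω : Ω | u < Real.logb 2 (1 + snr * H i ω)}
            ≤ μ (H i ⁻¹' Set.Ioi T) := measure_mono_ae hae
          _ = (Measure.map (H i) μ) (Set.Ioi T) :=
              (Measure.map_apply (hmeas i) measurableSet_Ioi).symm
          _ = expMeasure 1 (Set.Ioi T) := by rw [hdist i]
          _ = ENNReal.ofReal (Real.exp (-T)) := expMeasure_Ioi hT0
      have htot : μ {ω : Ω | R < ∑ i ∈ Finset.range m, Real.logb 2 (1 + snr * H i ω)}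
          ≤ (m : ENNReal) * ENNReal.ofReal (Real.exp (-T)) := by
        calc μ {ω : Ω | R < ∑ i ∈ Finset.range m, Real.logb 2 (1 + snr * H i ω)}
            ≤ μ (⋃ i ∈ Finset.range m, {ω : Ω | u < Real.logb 2 (1 + snr * H i ω)}) :=
              measure_mono hsub
          _ ≤ ∑ i ∈ Finset.range m, μ {ω : Ω | u < Real.logb 2 (1 + snr * H i ω)} :=
              measure_biUnion_finset_le _ _
          _ ≤ ∑ _i ∈ Finset.range m, ENNReal.ofReal (Real.exp (-T)) :=
              Finset.sum_le_sum (fun i _ => hone i)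
          _ = (m : ENNReal) * ENNReal.ofReal (Real.exp (-T)) := by
              rw [Finset.sum_const, Finset.card_range, nsmul_eq_mul]
      have htoReal : (μ {ω : Ω | R < ∑ i ∈ Finset.range m,
          Real.logb 2 (1 + snr * H i ω)}).toReal ≤ (m:ℝ) * Real.exp (-T) := by
        have h9 := ENNReal.toReal_mono
          (ENNReal.mul_ne_top (ENNReal.natCast_ne_top m) ENNReal.ofReal_ne_top) htot
        rwa [ENNReal.toReal_mul, ENNReal.toReal_natCast,
          ENNReal.toReal_ofReal (Real.exp_pos _).le] at h9
      have hTlow : c₀ * snr ^ β - 1 ≤ T := by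
        have ht' := hClb snr hsnr0
        have hmM : (m:ℝ) ≤ (M:ℝ) - 1 := by
          have : (m:ℝ) + 1 ≤ (M:ℝ) := by exact_mod_cast hm.2
          linarith
        have hu1 : (M:ℝ) * C snr / ((M:ℝ) - 1) ≤ u := by
          rw [hudef]
          gcongr
        have hu2 : (M:ℝ) / ((M:ℝ) - 1) * (Real.logb 2 snr + q) ≤ u := by
          refine le_trans ?_ hu1
          rw [div_mul_eq_mul_div]
          rw [div_le_div_iff₀ (by linarith) (by linarith)]
          nlinarith [mul_pos (mul_pos hMr0 (sub_pos.mpr ht'))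
            (by linarith : (0:ℝ) < (M:ℝ) - 1)]
        have h2u : (2:ℝ) ^ ((M:ℝ) / ((M:ℝ) - 1) * (Real.logb 2 snr + q)) ≤ (2:ℝ) ^ u :=
          Real.rpow_le_rpow_of_exponent_le one_le_two hu2
        have hsplit : (2:ℝ) ^ ((M:ℝ) / ((M:ℝ) - 1) * (Real.logb 2 snr + q))
            = snr * snr ^ β * c₀ := by
          rw [mul_add, Real.rpow_add two_pos]
          congr 1
          rw [mul_comm ((M:ℝ) / ((M:ℝ) - 1)) (Real.logb 2 snr),
            Real.rpow_mul (by norm_num : (0:ℝ) ≤ 2),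
            Real.rpow_logb two_pos (by norm_num) hsnr0]
          have hMsplit : (M:ℝ) / ((M:ℝ) - 1) = 1 + β := by
            have hne : (M:ℝ) - 1 ≠ 0 := by linarith
            rw [hβdef]
            field_simp
            ring
          rw [hMsplit, Real.rpow_add hsnr0, Real.rpow_one]
        have hTT : (snr * snr ^ β * c₀ - 1) / snr ≤ T := by
          rw [hTdef]
          exact (div_le_div_iff_of_pos_right hsnr0).mpr (by linarith [h2u, hsplit])
        have hfinal : (snr * snr ^ β * c₀ - 1) / snr = c₀ * snr ^ β - 1 / snr := by
          field_simp
        have h1snr : 1 / snr ≤ 1 := by rw [div_le_one hsnr0]; exact hs1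
        rw [hfinal] at hTT
        linarith
      calc (μ {ω : Ω | R < ∑ i ∈ Finset.range m,
            Real.logb 2 (1 + snr * H i ω)}).toReal
          ≤ (m:ℝ) * Real.exp (-T) := htoReal
        _ ≤ (M:ℝ) * Real.exp (-(c₀ * snr ^ β - 1)) := by
            apply mul_le_mul (by exact_mod_cast hm.2.le)
              (Real.exp_le_exp.mpr (by linarith)) (Real.exp_pos _).le hMr0.le
    -- assemble the bound for this snr
    have hsum : (M:ℝ) - E ≤ ((M:ℝ) - 1) * ((M:ℝ) * Real.exp (-(c₀ * snr ^ β - 1))) := by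
      rw [hstep2]
      calc ∑ m ∈ Finset.Ico 1 M, (μ {ω : Ω | numRounds H M snr R ω ≤ m}).toReal
          ≤ ∑ m ∈ Finset.Ico 1 M, (μ {ω : Ω | R < ∑ i ∈ Finset.range m,
              Real.logb 2 (1 + snr * H i ω)}).toReal :=
            Finset.sum_le_sum (fun m hm =>
              ENNReal.toReal_mono (measure_ne_top μ _) (hstep3 m hm))
        _ ≤ ∑ _m ∈ Finset.Ico 1 M, (M:ℝ) * Real.exp (-(c₀ * snr ^ β - 1)) :=
            Finset.sum_le_sum htail
        _ = ((M:ℝ) - 1) * ((M:ℝ) * Real.exp (-(c₀ * snr ^ β - 1))) := by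
            rw [Finset.sum_const, Nat.card_Ico, nsmul_eq_mul, Nat.cast_sub hM]
            norm_num
    constructor
    · have h6 : C snr ≤ R / E := by
        rw [le_div_iff₀ hEpos, hRdef]
        nlinarith
      linarith
    · have h6 : R / E ≤ C snr + C snr * ((M:ℝ) - E) := by
        rw [div_le_iff₀ hEpos, hRdef]
        nlinarith [mul_nonneg (sub_nonneg.mpr hE1) (sub_nonneg.mpr hEM), hCpos.le]
      have hK0 : 0 ≤ Real.logb 2 (1 + a) := Real.logb_nonneg one_lt_two (by linarith)
      have hlog2 : 0 < Real.log 2 := Real.log_pos one_lt_two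
      have hCup : C snr ≤ (Real.logb 2 (1 + a) + 1 / Real.log 2) * snr := by
        have h2 := hCub snr hsnr0
        have h3 : Real.logb 2 (1 + snr * a) ≤ Real.logb 2 ((1 + a) * snr) :=
          Real.logb_le_logb_of_le one_lt_two (by nlinarith) (by nlinarith)
        have h4 : Real.logb 2 ((1 + a) * snr) = Real.logb 2 (1 + a) + Real.logb 2 snr :=
          Real.logb_mul (by nlinarith) (ne_of_gt hsnr0)
        have h5 : Real.logb 2 snr ≤ snr * (1 / Real.log 2) := by
          have hlog : Real.log snr ≤ snr := (Real.log_le_sub_one_of_pos hsnr0).trans (by linarith)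
          rw [Real.logb]
          rw [div_le_iff₀ hlog2]
          calc Real.log snr ≤ snr := hlog
            _ = snr * (1 / Real.log 2) * Real.log 2 := by field_simp
        nlinarith [mul_nonneg hK0 (by linarith : (0:ℝ) ≤ snr - 1)]
      have hexp : Real.exp (-(c₀ * snr ^ β - 1)) = Real.exp 1 * Real.exp (-(c₀ * snr ^ β)) := by
        rw [← Real.exp_add]
        ring_nf
      have hxpos : 0 < Real.exp (-(c₀ * snr ^ β)) := Real.exp_pos _
      have hKpos : 0 < Real.logb 2 (1 + a) + 1 / Real.log 2 := by positivity
      have h7 : C snr * ((M:ℝ) - E) ≤ ((Real.logb 2 (1 + a) + 1 / Real.log 2) * snr) *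
          (((M:ℝ) - 1) * ((M:ℝ) * Real.exp (-(c₀ * snr ^ β - 1)))) := by
        apply mul_le_mul hCup hsum (by linarith) (by positivity)
      have h8 : ((Real.logb 2 (1 + a) + 1 / Real.log 2) * snr) *
          (((M:ℝ) - 1) * ((M:ℝ) * Real.exp (-(c₀ * snr ^ β - 1))))
          ≤ A * (snr * Real.exp (-(c₀ * snr ^ β))) := by
        rw [hexp, hAdef]
        nlinarith [mul_nonneg (mul_nonneg (mul_nonneg hKpos.le hsnr0.le) hMr0.le)
          (mul_pos (Real.exp_pos 1) hxpos).le]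
      linarith
  -- the limit of the upper bound
  have hg : Tendsto (fun snr : ℝ => A * (snr * Real.exp (-(c₀ * snr ^ β)))) atTop (𝓝 0) := by
    have l1 : Tendsto (fun y : ℝ => (c₀ * y) ^ (M - 1) * Real.exp (-(c₀ * y))) atTop (𝓝 0) := by
      have := (tendsto_pow_mul_exp_neg_atTop_nhds_zero (M - 1)).comp
        (tendsto_id.const_mul_atTop hc₀)
      exact this
    have l2 : Tendsto (fun y : ℝ => y ^ (M - 1) * Real.exp (-(c₀ * y))) atTop (𝓝 0) := by
      have hc₀n : (c₀ : ℝ) ^ (M - 1) ≠ 0 := pow_ne_zero _ (ne_of_gt hc₀)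
      have h10 := l1.const_mul ((c₀ ^ (M - 1))⁻¹)
      rw [mul_zero] at h10
      refine h10.congr (fun y => ?_)
      rw [mul_pow]
      field_simp
    have l3 : Tendsto (fun snr : ℝ => (snr ^ β) ^ (M - 1) *
        Real.exp (-(c₀ * snr ^ β))) atTop (𝓝 0) := by
      have := l2.comp (tendsto_rpow_atTop hβ)
      exact this
    have l4 : Tendsto (fun snr : ℝ => snr * Real.exp (-(c₀ * snr ^ β))) atTop (𝓝 0) := by
      refine Filter.Tendsto.congr' ?_ l3
      filter_upwards [eventually_gt_atTop (0:ℝ)] with snr hsnr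
      have hpow : (snr ^ β) ^ (M - 1) = snr := by
        rw [← Real.rpow_natCast (snr ^ β) (M - 1), ← Real.rpow_mul hsnr.le]
        rw [show ((M - 1 : ℕ) : ℝ) = (M:ℝ) - 1 by push_cast [Nat.cast_sub hM]; ring]
        rw [hβdef, inv_mul_cancel₀ (by linarith : (M:ℝ) - 1 ≠ 0), Real.rpow_one]
      rw [hpow]
    simpa using l4.const_mul A
  apply squeeze_zero' ?_ ?_ hg
  · filter_upwards [eventually_ge_atTop (1:ℝ)] with snr hs using (key snr hs).1
  · filter_upwards [eventually_ge_atTop (1:ℝ)] with snr hs using (key snr hs).2
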